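/- Let S be a *-semigroup. The maps I ↦ I ∩ I* and I ↦ √I are mutually inverse inclusion-preserving bijections between the set of left rooted left ideals of S and the set of quasi-rooted hereditary *-subsemigroups of S. -/

import Mathlib

namespace Stmt2

/-- `T* = {t* : t ∈ T}`. -/
def starSet {S : Type*} [Star S] (T : Set S) : Set S := star '' T

/-- `√T = {s : s* s ∈ T}`. -/
def sqrtS {S : Type*} [Mul S] [Star S] (T : Set S) : Set S := {s | star s * s ∈ T}

/-- `T` is a left ideal: `S T ⊆ T`. -/
def IsLeftIdeal {S : Type*} [Mul S] (T : Set S) : Prop := ∀ s : S, ∀ t ∈ T, s * t ∈ T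

/-- `T` is left rooted: `s* s ∈ T → s ∈ T`. -/
def IsLeftRooted {S : Type*} [Mul S] [Star S] (T : Set S) : Prop :=
  ∀ s : S, star s * s ∈ T → s ∈ T

/-- `T` is quasi-rooted: `s* s ∈ T` and `s s* ∈ T` imply `s ∈ T`. -/
def IsQuasiRooted {S : Type*} [Mul S] [Star S] (T : Set S) : Prop :=
  ∀ s : S, star s * s ∈ T → s * star s ∈ T → s ∈ T

/-- `T` is hereditary: `t* t ∈ T → t* s t ∈ T` for all `s ∈ S`. -/
def IsHereditary {S : Type*} [Mul S] [Star S] (T : Set S) : Prop :=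
  ∀ t : S, star t * t ∈ T → ∀ s : S, star t * s * t ∈ T

/-- `T` is a *-subsemigroup: `T = T*` and `T T ⊆ T`. -/
def IsStarSubsemigroup {S : Type*} [Mul S] [Star S] (T : Set S) : Prop :=
  starSet T = T ∧ ∀ a ∈ T, ∀ b ∈ T, a * b ∈ T


lemma mem_starSet {S : Type*} [InvolutiveStar S] {T : Set S} {x : S} :
    x ∈ starSet T ↔ star x ∈ T := by
  constructor
  · rintro ⟨t, ht, rfl⟩; simpa using ht
  · intro h; exact ⟨star x, h, star_star x⟩

/-- In a *-semigroup `S`, the maps `I ↦ I ∩ I*` and `I ↦ √I`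
are mutually inverse inclusion-preserving bijections between the left rooted left
ideals of `S` and the quasi-rooted hereditary *-subsemigroups of `S`. -/
theorem stmt_2 {S : Type*} [Semigroup S] [StarMul S] :
    (∀ I : Set S, IsLeftRooted I → IsLeftIdeal I →
      (IsQuasiRooted (I ∩ starSet I) ∧ IsHereditary (I ∩ starSet I) ∧
        IsStarSubsemigroup (I ∩ starSet I)) ∧
      sqrtS (I ∩ starSet I) = I) ∧
    (∀ J : Set S, IsQuasiRooted J → IsHereditary J → IsStarSubsemigroup J →
      (IsLeftRooted (sqrtS J) ∧ IsLeftIdeal (sqrtS J)) ∧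
      sqrtS J ∩ starSet (sqrtS J) = J) ∧
    (∀ I I' : Set S, I ⊆ I' → I ∩ starSet I ⊆ I' ∩ starSet I') ∧
    (∀ J J' : Set S, J ⊆ J' → sqrtS J ⊆ sqrtS J') := by
  refine ⟨?_, ?_, ?_, ?_⟩
  · intro I hroot hideal
    have hmem : ∀ x ∈ I, star x * x ∈ I := fun x hx => hideal (star x) x hx
    refine ⟨⟨?_, ?_, ?_, ?_⟩, ?_⟩
    · -- quasi rooted
      intro s hs1 hs2
      refine ⟨hroot s hs1.1, mem_starSet.mpr (hroot (star s) ?_)⟩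
      simpa using hs2.1
    · -- hereditary
      intro t ht s
      have htI : t ∈ I := hroot t ht.1
      constructor
      · rw [mul_assoc]; exact hideal _ _ (hideal _ _ htI)
      · rw [mem_starSet]
        have : star t * (star s * t) ∈ I := hideal _ _ (hideal _ _ htI)
        simpa [star_mul, mul_assoc] using this
    · -- starSet eq
      ext x
      rw [mem_starSet]
      simp only [Set.mem_inter_iff, mem_starSet, star_star]
      exact And.comm
    · -- mul closed
      intro a ha b hb
      constructor
      · exact hideal a b hb.1
      · rw [mem_starSet, star_mul]
        exact hideal (star b) (star a) (mem_starSet.mp ha.2)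
    · -- sqrtS (I ∩ I*) = I
      ext s
      simp only [sqrtS, Set.mem_setOf_eq, Set.mem_inter_iff, mem_starSet, star_mul, star_star]
      constructor
      · exact fun h => hroot s h.1
      · exact fun h => ⟨hmem s h, hmem s h⟩
  · intro J hq hh hss
    obtain ⟨hstar, hmul⟩ := hss
    have hJstar : ∀ x ∈ J, star x ∈ J := by
      intro x hx
      rw [← hstar, mem_starSet, star_star]; exact hx
    refine ⟨⟨?_, ?_⟩, ?_⟩
    · -- left rooted
      intro s hs
      have hs0 : star (star s * s) * (star s * s) ∈ J := hs
      have hs' : (star s * s) * (star s * s) ∈ J := by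
        simpa [star_mul, mul_assoc] using hs0
      have := hq (star s * s) (by simpa [star_mul, mul_assoc] using hs')
        (by simpa [star_mul, mul_assoc] using hs')
      exact this
    · -- left ideal
      intro s t ht
      show star (s * t) * (s * t) ∈ J
      have := hh t ht (star s * s)
      simpa [star_mul, mul_assoc] using this
    · -- sqrtS J ∩ (sqrtS J)* = J
      ext x
      simp only [Set.mem_inter_iff, mem_starSet, sqrtS, Set.mem_setOf_eq, star_star]
      constructor
      · exact fun h => hq x h.1 h.2
      · exact fun hx => ⟨hmul _ (hJstar x hx) _ hx, hmul _ hx _ (hJstar x hx)⟩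
  · exact fun I I' h x hx => ⟨h hx.1, Set.image_mono h hx.2⟩
  · exact fun J J' h s hs => h hs


end Stmt2
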